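/- For every cost matrix C ∈ ℝ^{m×n}, every regularization parameter λ > 0, and all probability vectors μ ∈ Σ_m and ν ∈ Σ_n, the entropy-regularized optimal transport problem min over π ∈ U(μ,ν) of ⟨π, C⟩ − H(π)/λ has exactly one minimizer (i.e., there exists a unique π^λ ∈ U(μ,ν) attaining the minimum). -/

import Mathlib

/-- Membership in the transport polytope `U(μ, ν)`. -/
def inU {m n : ℕ} (μ : Fin m → ℝ) (ν : Fin n → ℝ) (π : Matrix (Fin m) (Fin n) ℝ) : Prop :=
  (∀ i j, 0 ≤ π i j) ∧ (∀ i, ∑ j, π i j = μ i) ∧ (∀ j, ∑ i, π i j = ν j)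

/-- The entropy-regularized optimal transport objective `⟨π, C⟩ - H(π)/λ`, where
`H(π) = -∑ᵢⱼ πᵢⱼ (log πᵢⱼ - 1)` (note `Real.log 0 = 0`, matching the convention
`0 · (log 0 - 1) = 0`). -/
noncomputable def rotObj {m n : ℕ} (C : Matrix (Fin m) (Fin n) ℝ) (lam : ℝ)
    (π : Matrix (Fin m) (Fin n) ℝ) : ℝ :=
  (∑ i, ∑ j, π i j * C i j) - (-∑ i, ∑ j, π i j * (Real.log (π i j) - 1)) / lam

lemma rotObj_eq {m n : ℕ} (C : Matrix (Fin m) (Fin n) ℝ) (lam : ℝ)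
    (π : Matrix (Fin m) (Fin n) ℝ) :
    rotObj C lam π = (∑ i, ∑ j, π i j * C i j)
      + (∑ i, ∑ j, π i j * Real.log (π i j)) / lam - (∑ i, ∑ j, π i j) / lam := by
  unfold rotObj
  have h : ∀ i, ∑ j, π i j * (Real.log (π i j) - 1)
      = (∑ j, π i j * Real.log (π i j)) - ∑ j, π i j := by
    intro i
    rw [← Finset.sum_sub_distrib]
    exact Finset.sum_congr rfl fun j _ => by ring
  rw [Finset.sum_congr rfl fun i _ => h i, Finset.sum_sub_distrib]
  ring

/-- strict midpoint convexity of `x ↦ x log x` on nonnegatives -/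
lemma mul_log_mid {a b : ℝ} (ha : 0 ≤ a) (hb : 0 ≤ b) (hab : a ≠ b) :
    ((a + b) / 2) * Real.log ((a + b) / 2)
      < (a * Real.log a + b * Real.log b) / 2 := by
  have h := Real.strictConvexOn_mul_log.2 ha hb hab (by norm_num : (0:ℝ) < 1/2)
    (by norm_num : (0:ℝ) < 1/2) (by norm_num)
  simp only [smul_eq_mul] at h
  have he : (1:ℝ)/2 * a + 1/2 * b = (a + b) / 2 := by ring
  rw [he] at h
  calc ((a + b) / 2) * Real.log ((a + b) / 2)
      < 1/2 * (a * Real.log a) + 1/2 * (b * Real.log b) := h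
    _ = (a * Real.log a + b * Real.log b) / 2 := by ring

lemma mul_log_mid_le {a b : ℝ} (ha : 0 ≤ a) (hb : 0 ≤ b) :
    ((a + b) / 2) * Real.log ((a + b) / 2)
      ≤ (a * Real.log a + b * Real.log b) / 2 := by
  rcases eq_or_ne a b with rfl | h
  · rw [add_self_div_two, add_self_div_two]
  · exact (mul_log_mid ha hb h).le

/-- For every cost matrix `C`, every `λ > 0` and all probability vectors `μ ∈ Σ_m`, `ν ∈ Σ_n`,
the entropy-regularized optimal transport problem has exactly one minimizer over `U(μ, ν)`. -/
theorem rot_exists_unique_minimizer (m n : ℕ)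
    (C : Matrix (Fin m) (Fin n) ℝ) (lam : ℝ) (hlam : 0 < lam)
    (μ : Fin m → ℝ) (ν : Fin n → ℝ)
    (hμ0 : ∀ i, 0 ≤ μ i) (hμ1 : ∑ i, μ i = 1)
    (hν0 : ∀ j, 0 ≤ ν j) (hν1 : ∑ j, ν j = 1) :
    ∃! π : Matrix (Fin m) (Fin n) ℝ,
      inU μ ν π ∧ ∀ π' : Matrix (Fin m) (Fin n) ℝ, inU μ ν π' →
        rotObj C lam π ≤ rotObj C lam π' := by
  classical
  set U : Set (Matrix (Fin m) (Fin n) ℝ) := {π | inU μ ν π} with hUdef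
  have happly : ∀ (i : Fin m) (j : Fin n),
      Continuous fun π : Matrix (Fin m) (Fin n) ℝ => π i j := fun i j =>
    (continuous_apply j).comp (continuous_apply i)
  -- nonempty
  have hne : U.Nonempty := by
    refine ⟨Matrix.of fun i j => μ i * ν j, ?_, ?_, ?_⟩
    · intro i j; exact mul_nonneg (hμ0 i) (hν0 j)
    · intro i; simp [← Finset.mul_sum, hν1]
    · intro j; simp [← Finset.sum_mul, hμ1]
  -- closed
  have hclosed : IsClosed U := by
    have hUeq : U = {π : Matrix (Fin m) (Fin n) ℝ | ∀ i j, 0 ≤ π i j}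
        ∩ ({π | ∀ i, ∑ j, π i j = μ i} ∩ {π | ∀ j, ∑ i, π i j = ν j}) := by
      ext π
      simp [hUdef, inU, Set.mem_inter_iff, and_assoc]
    rw [hUeq]
    refine IsClosed.inter ?_ (IsClosed.inter ?_ ?_)
    · have : {π : Matrix (Fin m) (Fin n) ℝ | ∀ i j, 0 ≤ π i j}
          = ⋂ i, ⋂ j, {π | 0 ≤ π i j} := by ext; simp
      rw [this]
      exact isClosed_iInter fun i => isClosed_iInter fun j =>
        isClosed_le continuous_const (happly i j)
    · have : {π : Matrix (Fin m) (Fin n) ℝ | ∀ i, ∑ j, π i j = μ i}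
          = ⋂ i, {π | ∑ j, π i j = μ i} := by ext; simp
      rw [this]
      exact isClosed_iInter fun i =>
        isClosed_eq (continuous_finset_sum _ fun j _ => happly i j) continuous_const
    · have : {π : Matrix (Fin m) (Fin n) ℝ | ∀ j, ∑ i, π i j = ν j}
          = ⋂ j, {π | ∑ i, π i j = ν j} := by ext; simp
      rw [this]
      exact isClosed_iInter fun j =>
        isClosed_eq (continuous_finset_sum _ fun i _ => happly i j) continuous_const
  -- compact
  have hcompact : IsCompact U := by
    have hK : IsCompact ((Set.univ : Set (Fin m)).pi
        fun _ => (Set.univ : Set (Fin n)).pi fun _ => Set.Icc (0:ℝ) 1) :=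
      isCompact_univ_pi fun _ => isCompact_univ_pi fun _ => isCompact_Icc
    refine hK.of_isClosed_subset hclosed ?_
    intro π hπ
    obtain ⟨h0, hrow, hcol⟩ := hπ
    intro i _
    intro j _
    refine ⟨h0 i j, ?_⟩
    have h1 : π i j ≤ ∑ j', π i j' :=
      Finset.single_le_sum (fun j' _ => h0 i j') (Finset.mem_univ j)
    have h2 : μ i ≤ ∑ i', μ i' :=
      Finset.single_le_sum (fun i' _ => hμ0 i') (Finset.mem_univ i)
    rw [hrow i] at h1
    rw [hμ1] at h2
    linarith
  -- continuous objective
  have hcont : Continuous (rotObj C lam) := by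
    unfold rotObj
    apply Continuous.sub
    · exact continuous_finset_sum _ fun i _ => continuous_finset_sum _ fun j _ =>
        (happly i j).mul continuous_const
    · apply Continuous.div_const
      apply Continuous.neg
      refine continuous_finset_sum _ fun i _ => continuous_finset_sum _ fun j _ => ?_
      have : (fun π : Matrix (Fin m) (Fin n) ℝ => π i j * (Real.log (π i j) - 1))
          = fun π => (π i j * Real.log (π i j)) - π i j := funext fun π => by ring
      rw [this]
      exact (Real.continuous_mul_log.comp (happly i j)).sub (happly i j)
  obtain ⟨π₀, hπ₀U, hmin⟩ := hcompact.exists_isMinOn hne hcont.continuousOn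
  have hmin' : ∀ π' : Matrix (Fin m) (Fin n) ℝ, inU μ ν π' →
      rotObj C lam π₀ ≤ rotObj C lam π' := fun π' h' => hmin h'
  refine ⟨π₀, ⟨hπ₀U, hmin'⟩, ?_⟩
  rintro π' ⟨hπ'U, hπ'min⟩
  by_contra hne'
  -- the two minimizers have equal value
  have heq : rotObj C lam π' = rotObj C lam π₀ :=
    le_antisymm (hπ'min π₀ hπ₀U) (hmin' π' hπ'U)
  obtain ⟨h0', hrow', hcol'⟩ := hπ'U
  obtain ⟨h0₀, hrow₀, hcol₀⟩ := hπ₀U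
  -- the midpoint
  set σ : Matrix (Fin m) (Fin n) ℝ := Matrix.of fun i j => (π' i j + π₀ i j) / 2 with hσdef
  have hσapp : ∀ i j, σ i j = (π' i j + π₀ i j) / 2 := fun i j => rfl
  have hσU : inU μ ν σ := by
    refine ⟨fun i j => ?_, fun i => ?_, fun j => ?_⟩
    · rw [hσapp]
      exact div_nonneg (add_nonneg (h0' i j) (h0₀ i j)) (by norm_num)
    · simp only [hσapp]
      rw [← Finset.sum_div, Finset.sum_add_distrib, hrow' i, hrow₀ i, add_self_div_two]
    · simp only [hσapp]
      rw [← Finset.sum_div, Finset.sum_add_distrib, hcol' j, hcol₀ j, add_self_div_two]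
  -- linear parts average exactly
  have hl1 : (∑ i, ∑ j, σ i j * C i j)
      = ((∑ i, ∑ j, π' i j * C i j) + ∑ i, ∑ j, π₀ i j * C i j) / 2 := by
    have h : ∀ i j, σ i j * C i j = (π' i j * C i j + π₀ i j * C i j) / 2 := fun i j => by
      rw [hσapp]; ring
    simp only [h, ← Finset.sum_div, Finset.sum_add_distrib]
  have hl2 : (∑ i, ∑ j, σ i j) = ((∑ i, ∑ j, π' i j) + ∑ i, ∑ j, π₀ i j) / 2 := by
    simp only [hσapp, ← Finset.sum_div, Finset.sum_add_distrib]
  -- entropy part: strict inequality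
  have hdiff : ∃ i j, π' i j ≠ π₀ i j := by
    by_contra hc
    push_neg at hc
    exact hne' (by ext i j; exact hc i j)
  obtain ⟨i₀, j₀, hij⟩ := hdiff
  have hE : (∑ i, ∑ j, σ i j * Real.log (σ i j))
      < ((∑ i, ∑ j, π' i j * Real.log (π' i j))
        + ∑ i, ∑ j, π₀ i j * Real.log (π₀ i j)) / 2 := by
    rw [← Fintype.sum_prod_type', ← Fintype.sum_prod_type', ← Fintype.sum_prod_type']
    rw [← Finset.sum_add_distrib, Finset.sum_div]
    refine Finset.sum_lt_sum (fun x _ => ?_) ⟨(i₀, j₀), Finset.mem_univ _, ?_⟩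
    · rw [hσapp]
      exact mul_log_mid_le (h0' x.1 x.2) (h0₀ x.1 x.2)
    · rw [hσapp]
      exact mul_log_mid (h0' i₀ j₀) (h0₀ i₀ j₀) hij
  -- conclude strict inequality of objectives
  have hfrac : (∑ i, ∑ j, σ i j * Real.log (σ i j)) / lam
      < (((∑ i, ∑ j, π' i j * Real.log (π' i j))
        + ∑ i, ∑ j, π₀ i j * Real.log (π₀ i j)) / 2) / lam := by
    gcongr
  have h3 : ∀ a b : ℝ, (a + b) / 2 / lam = (a / lam + b / lam) / 2 := fun a b => by
    rw [← add_div, div_div, div_div, mul_comm]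
  have hcomb : rotObj C lam σ < (rotObj C lam π' + rotObj C lam π₀) / 2 := by
    rw [rotObj_eq C lam σ, rotObj_eq C lam π', rotObj_eq C lam π₀, hl1, hl2]
    linarith [hfrac,
      h3 (∑ i, ∑ j, π' i j * Real.log (π' i j)) (∑ i, ∑ j, π₀ i j * Real.log (π₀ i j)),
      h3 (∑ i, ∑ j, π' i j) (∑ i, ∑ j, π₀ i j)]
  have hlt : rotObj C lam σ < rotObj C lam π₀ := by
    rw [heq] at hcomb
    linarith
  exact absurd (hmin' σ hσU) (not_le.mpr hlt)
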